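/- arXiv:1410.3589 — 2 statements merged into one kernel-verified Lean document; each statement's English description precedes it below -/
import Mathlib

section
/- Let G ≤ H be divisible ordered abelian groups. If there exist convex subgroups C₁ ⊴ C₂ ⊴ H such that C₂ is order-isomorphic to G × C₁ with the lexicographic order (via an isomorphism restricting to the inclusion of G), then for every x ∈ H, if there exists y ∈ G with |x| < |y|, then there exists z ∈ G with |x - z| < g for every positive g ∈ G. -/
/-- Let `G ≤ H` be divisible ordered abelian groups. If there are convex
subgroups `C₁ ⊴ C₂ ⊴ H` with `C₂ ≅ G ×ₗ C₁` (lexicographic order) via an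
additive order isomorphism restricting to the inclusion of `G`, then every
`x ∈ H` bounded by some element of `G` is infinitesimally close to some
element of `G`. -/
theorem exists_infinitesimally_close_of_lex_decomposition
    {H : Type*} [AddCommGroup H] [LinearOrder H] [IsOrderedAddMonoid H] (G : AddSubgroup H)
    (hHdiv : ∀ x : H, ∀ n : ℕ, 0 < n → ∃ y : H, n • y = x)
    (hGdiv : ∀ x ∈ G, ∀ n : ℕ, 0 < n → ∃ y ∈ G, n • y = x)
    (C₁ C₂ : AddSubgroup H)
    (hC₁convex : ∀ a b : H, 0 ≤ a → a ≤ b → b ∈ C₁ → a ∈ C₁)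
    (hC₂convex : ∀ a b : H, 0 ≤ a → a ≤ b → b ∈ C₂ → a ∈ C₂)
    (hC₁C₂ : C₁ ≤ C₂) (hGC₂ : G ≤ C₂)
    (φ : C₂ →+ G × C₁) (hφbij : Function.Bijective φ)
    (hφord : ∀ a b : C₂, (a : H) ≤ (b : H) ↔
      (((φ a).1 : H) < ((φ b).1 : H) ∨
        ((φ a).1 = (φ b).1 ∧ ((φ a).2 : H) ≤ ((φ b).2 : H))))
    (hφres : ∀ g : H, ∀ hg : g ∈ G, φ ⟨g, hGC₂ hg⟩ = (⟨g, hg⟩, 0)) :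
    ∀ x : H, (∃ y ∈ G, |x| < |y|) → ∃ z ∈ G, ∀ g ∈ G, 0 < g → |x - z| < g := by
  intro x ⟨y, hyG, hxy⟩
  -- |y| ∈ C₂
  have hyC₂ : y ∈ C₂ := hGC₂ hyG
  have habsy : |y| ∈ C₂ := by
    rcases abs_choice y with h | h <;> rw [h]
    · exact hyC₂
    · exact C₂.neg_mem hyC₂
  have habsx : |x| ∈ C₂ := hC₂convex |x| |y| (abs_nonneg x) hxy.le habsy
  have hxC₂ : x ∈ C₂ := by
    rcases abs_choice x with h | h
    · rwa [← h]
    · have h2 := C₂.neg_mem habsx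
      rw [h, neg_neg] at h2; exact h2
  set a : C₂ := ⟨x, hxC₂⟩ with ha
  set z : H := ((φ a).1 : H) with hz
  have hzG : z ∈ G := (φ a).1.2
  refine ⟨z, hzG, ?_⟩
  intro g hgG hgpos
  have hb : x - z ∈ C₂ := C₂.sub_mem hxC₂ (hGC₂ hzG)
  set b : C₂ := ⟨x - z, hb⟩ with hbdef
  have hbeq : b = a - ⟨z, hGC₂ hzG⟩ := rfl
  have hφb : φ b = ((φ a).1 - (φ a).1, (φ a).2 - 0) := by
    rw [hbeq, map_sub, hφres z hzG]
    rfl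
  have hφb1 : ((φ b).1 : H) = 0 := by rw [hφb]; simp
  set gC : C₂ := ⟨g, hGC₂ hgG⟩ with hgC
  have hφg : φ gC = (⟨g, hgG⟩, 0) := hφres g hgG
  -- not g ≤ b and not g ≤ -b
  have key : ∀ c : C₂, ((φ c).1 : H) = 0 → (c : H) < g := by
    intro c hc
    by_contra hle
    push_neg at hle
    have := (hφord gC c).mp hle
    rw [hφg, hc] at this
    rcases this with h | ⟨h, _⟩
    · exact absurd h (not_lt.mpr hgpos.le)
    · have h0 : (g : H) = ((φ c).1 : H) := congrArg (fun t : G => (t : H)) h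
      rw [hc] at h0
      exact absurd h0 hgpos.ne'
  have h1 : x - z < g := key b hφb1
  have h2 : -(x - z) < g := by
    have : ((φ (-b)).1 : H) = 0 := by
      rw [map_neg, Prod.fst_neg]
      simp [hφb1]
    exact key (-b) this
  exact abs_lt.mpr ⟨neg_lt.mp h2, h1⟩
end

section
/- Let G, H be divisible ordered abelian groups with G ≤ H. Suppose that for all x ∈ H, if there is y ∈ G with |x| < |y| then there is z ∈ G with |x - z| < g for all positive g ∈ G. Then no element of H realizes a cut over G: for every a ∈ H ∖ G, either a > G, or a < G, or there exists b ∈ G such that a realizes b⁺ or b⁻ over G (i.e., the set {x ∈ G : x < a} has a supremum-like behavior: it has a maximum, or its complement in G has a minimum, or it is empty or all of G). -/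
/-- If `G ≤ H` are divisible ordered abelian groups such that every `x ∈ H`
bounded by an element of `G` is infinitesimally close to an element of `G`,
then no element of `H` realizes a cut over `G`: every `a ∈ H ∖ G` is above
`G`, below `G`, or realizes a type `b⁺` or `b⁻` for some `b ∈ G`. -/
theorem no_cut_of_infinitesimal_approximation
    {H : Type*} [AddCommGroup H] [LinearOrder H] [IsOrderedAddMonoid H] (G : AddSubgroup H)
    (hHdiv : ∀ x : H, ∀ n : ℕ, 0 < n → ∃ y : H, n • y = x)
    (hGdiv : ∀ x ∈ G, ∀ n : ℕ, 0 < n → ∃ y ∈ G, n • y = x)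
    (happrox : ∀ x : H, (∃ y ∈ G, |x| < |y|) →
      ∃ z ∈ G, ∀ g ∈ G, 0 < g → |x - z| < g) :
    ∀ a : H, a ∉ G →
      (∀ x ∈ G, x < a) ∨ (∀ x ∈ G, a < x) ∨
      (∃ b ∈ G, (b < a ∧ ∀ c ∈ G, ¬ (b < c ∧ c ≤ a)) ∨
                (a < b ∧ ∀ c ∈ G, ¬ (a ≤ c ∧ c < b))) := by
  intro a ha
  by_cases hup : ∀ x ∈ G, x < a
  · exact Or.inl hup
  by_cases hdown : ∀ x ∈ G, a < x
  · exact Or.inr (Or.inl hdown)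
  right; right
  push_neg at hup hdown
  obtain ⟨x₁, hx₁G, hx₁⟩ := hup
  obtain ⟨x₂, hx₂G, hx₂⟩ := hdown
  have hax₁ : a < x₁ := lt_of_le_of_ne hx₁ (fun h => ha (h ▸ hx₁G))
  have hx₂a : x₂ < a := lt_of_le_of_ne hx₂ (fun h => ha (h ▸ hx₂G))
  have hbound : ∃ y ∈ G, |a| < |y| := by
    rcases le_or_gt 0 a with h0 | h0
    · refine ⟨x₁, hx₁G, ?_⟩
      rw [abs_of_nonneg h0]
      exact lt_of_lt_of_le hax₁ (le_abs_self x₁)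
    · refine ⟨x₂, hx₂G, ?_⟩
      rw [abs_of_neg h0]
      have hx₂neg : x₂ < 0 := lt_trans hx₂a h0
      rw [abs_of_neg hx₂neg]
      exact neg_lt_neg hx₂a
  obtain ⟨z, hzG, hz⟩ := happrox a hbound
  refine ⟨z, hzG, ?_⟩
  rcases lt_trichotomy z a with h | h | h
  · left
    refine ⟨h, fun c hcG ⟨hc1, hc2⟩ => ?_⟩
    have hlt' := hz (c - z) (G.sub_mem hcG hzG) (sub_pos.mpr hc1)
    rw [abs_of_pos (sub_pos.mpr h)] at hlt'
    exact absurd hc2 (not_le.mpr ((sub_lt_sub_iff_right z).mp hlt'))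
  · exact absurd (h ▸ hzG) ha
  · right
    refine ⟨h, fun c hcG ⟨hc1, hc2⟩ => ?_⟩
    have hlt' := hz (z - c) (G.sub_mem hzG hcG) (sub_pos.mpr hc2)
    rw [abs_of_neg (sub_neg.mpr h), neg_sub] at hlt'
    exact absurd hc1 (not_le.mpr ((sub_lt_sub_iff_left z).mp hlt'))
end
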